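/- Let u,v,w be rational numbers with D := (1-u²)(v²-1)(w²-1)+8uvw ≠ 0 and u,v,w ≠ 0. Define x = (u-1)w(1+u-2v+2uv+v²+uv²+(-1-u+v²+uv²)w)/D, y = u(v-1)(1-u+v-uv+(-2+2v)w+(1+u+v+uv)w²)/D, z = v(w-1)(1-2u+u²-v+u²v+(1+2u+u²-v+u²v)w)/D, p = (ux+y)/u, q = (vy+z)/v, r = (wz+x)/w. Then t_x+t_y=t_p, t_y+t_z=t_q, t_z+t_x=t_r, where t_s = s(s+1)/2. -/

import Mathlib

def triQ (s : ℚ) : ℚ := s * (s + 1) / 2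

theorem stmt_8 (u v w : ℚ) (hu : u ≠ 0) (hv : v ≠ 0) (hw : w ≠ 0)
    (D : ℚ) (hD : D = (1 - u^2) * (v^2 - 1) * (w^2 - 1) + 8*u*v*w) (hD0 : D ≠ 0)
    (x y z p q r : ℚ)
    (hx : x = (u-1)*w*(1+u-2*v+2*u*v+v^2+u*v^2+(-1-u+v^2+u*v^2)*w) / D)
    (hy : y = u*(v-1)*(1-u+v-u*v+(-2+2*v)*w+(1+u+v+u*v)*w^2) / D)
    (hz : z = v*(w-1)*(1-2*u+u^2-v+u^2*v+(1+2*u+u^2-v+u^2*v)*w) / D)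
    (hp : p = (u*x + y) / u) (hq : q = (v*y + z) / v) (hr : r = (w*z + x) / w) :
    triQ x + triQ y = triQ p ∧ triQ y + triQ z = triQ q ∧
    triQ z + triQ x = triQ r := by
  subst hx hy hz hp hq hr
  refine ⟨?_, ?_, ?_⟩ <;> unfold triQ <;> field_simp <;> subst hD <;> ring
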